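/- Let U be a finite set, f : 2^U → ℝ monotone non-decreasing submodular with f(∅) = 0, d a metric on U, λ ≥ 0, and b ≥ 2 even. Consider the greedy pairs algorithm that, starting from S^0 = ∅, at step i picks a pair e_i = {u, v} disjoint from S^{i−1} maximizing φ_e(S^{i−1}) := f(S^{i−1} ∪ e) − f(S^{i−1}) + 2λ(b−1) d(u, v), and sets S^i = S^{i−1} ∪ e_i, for i = 1, ..., b/2. Then the output S = S^{b/2} satisfies 4·G(S) ≥ G(O) for every O ⊆ U with |O| = b, where G(T) = f(T) + λ·Σ_{{u,v} ⊆ T} 2 d(u, v). -/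

import Mathlib

open Finset

section Aux
variable {α : Type*} [DecidableEq α]

/-- single-element marginal comparison, no freshness needed -/
lemma marg_single (f : Finset α → ℝ)
    (hmono : ∀ A B : Finset α, A ⊆ B → f A ≤ f B)
    (hsub : ∀ A B : Finset α, A ⊆ B → ∀ x ∉ B,
      f (insert x B) - f B ≤ f (insert x A) - f A)
    {A B : Finset α} (hAB : A ⊆ B) (q : α) :
    f (insert q B) - f B ≤ f (insert q A) - f A := by
  by_cases hq : q ∈ B
  · rw [Finset.insert_eq_self.2 hq]
    have := hmono A (insert q A) (Finset.subset_insert _ _)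
    linarith
  · exact hsub A B hAB q hq

/-- pair marginal comparison -/
lemma marg_pair (f : Finset α → ℝ)
    (hmono : ∀ A B : Finset α, A ⊆ B → f A ≤ f B)
    (hsub : ∀ A B : Finset α, A ⊆ B → ∀ x ∉ B,
      f (insert x B) - f B ≤ f (insert x A) - f A)
    {A B : Finset α} (hAB : A ⊆ B) (p q : α) :
    f (insert p (insert q B)) - f B ≤ f (insert p (insert q A)) - f A := by
  have h1 := marg_single f hmono hsub (Finset.insert_subset_insert q hAB) p
  have h2 := marg_single f hmono hsub hAB q
  linarith

end Aux

section Aux2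
variable {α : Type*} [MetricSpace α] [Fintype α] [DecidableEq α]

lemma sum_dist_image (k : ℕ) (x y : Fin k → α)
    (hinj : Function.Injective (Sum.elim x y)) :
    ∑ p ∈ Finset.image (Sum.elim x y) Finset.univ,
      ∑ q ∈ Finset.image (Sum.elim x y) Finset.univ, dist p q
    = ∑ i, ∑ j, (dist (x i) (x j) + dist (x i) (y j)
        + dist (y i) (x j) + dist (y i) (y j)) := by
  rw [Finset.sum_image (fun a _ b _ h => hinj h)]
  have : ∀ a : Fin k ⊕ Fin k,
      ∑ q ∈ Finset.image (Sum.elim x y) Finset.univ, dist (Sum.elim x y a) q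
      = ∑ b, dist (Sum.elim x y a) (Sum.elim x y b) := by
    intro a; rw [Finset.sum_image (fun a _ b _ h => hinj h)]
  simp_rw [this]
  rw [Fintype.sum_sum_type]
  simp_rw [Fintype.sum_sum_type]
  rw [← Finset.sum_add_distrib]
  congr 1
  ext i
  simp [Finset.sum_add_distrib]
  ring

lemma sum_dist_lower (k : ℕ) (x y : Fin k → α)
    (hinj : Function.Injective (Sum.elim x y)) :
    2 * (k:ℝ) * ∑ j, dist (x j) (y j)
      ≤ ∑ p ∈ Finset.image (Sum.elim x y) Finset.univ,
          ∑ q ∈ Finset.image (Sum.elim x y) Finset.univ, dist p q := by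
  rw [sum_dist_image k x y hinj]
  have key : ∀ i j : Fin k,
      dist (x i) (y i) + dist (x j) (y j)
        ≤ dist (x i) (x j) + dist (x i) (y j) + dist (y i) (x j) + dist (y i) (y j) := by
    intro i j
    have t1 : dist (x i) (y i) ≤ dist (x i) (x j) + dist (x j) (y i) := dist_triangle _ _ _
    have t2 : dist (x i) (y i) ≤ dist (x i) (y j) + dist (y j) (y i) := dist_triangle _ _ _
    have t3 : dist (x j) (y j) ≤ dist (x j) (x i) + dist (x i) (y j) := dist_triangle _ _ _
    have t4 : dist (x j) (y j) ≤ dist (x j) (y i) + dist (y i) (y j) := dist_triangle _ _ _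
    have c1 : dist (x j) (y i) = dist (y i) (x j) := dist_comm _ _
    have c2 : dist (y j) (y i) = dist (y i) (y j) := dist_comm _ _
    have c3 : dist (x j) (x i) = dist (x i) (x j) := dist_comm _ _
    linarith
  calc 2 * (k:ℝ) * ∑ j, dist (x j) (y j)
      = ∑ i : Fin k, ∑ j : Fin k, (dist (x i) (y i) + dist (x j) (y j)) := by
        simp [Finset.sum_add_distrib, Finset.mul_sum, Finset.card_univ, Finset.sum_mul]; ring_nf
        rw [Finset.sum_mul]
    _ ≤ _ := Finset.sum_le_sum (fun i _ => Finset.sum_le_sum (fun j _ => key i j))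

end Aux2

section Aux3
variable {α : Type*} [MetricSpace α] [Fintype α] [DecidableEq α]

lemma sum_split {k : ℕ} {i j : Fin k} (hij : i ≠ j) (g : Fin k → ℝ) :
    ∑ a, g a = g i + g j + ∑ a ∈ (Finset.univ.erase i).erase j, g a := by
  rw [← Finset.add_sum_erase _ g (Finset.mem_univ i),
    ← Finset.add_sum_erase _ g (Finset.mem_erase.2 ⟨hij.symm, Finset.mem_univ j⟩)]
  ring

lemma exists_matching (k : ℕ) (hk : 1 ≤ k) (O : Finset α) (hO : O.card = 2 * k) :
    ∃ x y : Fin k → α, Function.Injective (Sum.elim x y) ∧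
      Finset.image (Sum.elim x y) Finset.univ = O ∧
      (∑ p ∈ O, ∑ q ∈ O, dist p q) ≤ (4 * (k:ℝ) - 2) * ∑ j, dist (x j) (y j) := by
  classical
  -- the type of pairings of O
  let P := {p : (Fin k → α) × (Fin k → α) //
    Function.Injective (Sum.elim p.1 p.2) ∧
    Finset.image (Sum.elim p.1 p.2) Finset.univ = O}
  -- P is nonempty
  have hne : Nonempty P := by
    have e : Fin k ⊕ Fin k ≃ {z // z ∈ O} :=
      (finSumFinEquiv.trans (finCongr (by omega))).trans O.equivFin.symm
    set F : Fin k ⊕ Fin k → α := fun a => (e a : α) with hF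
    have hFinj : Function.Injective F :=
      Subtype.val_injective.comp e.injective
    have himg : Finset.image F Finset.univ = O := by
      apply Finset.eq_of_subset_of_card_le
      · intro z hz
        simp only [Finset.mem_image] at hz
        obtain ⟨a, -, rfl⟩ := hz
        exact (e a).2
      · rw [Finset.card_image_of_injective _ hFinj]
        simp [hO]
        omega
    refine ⟨⟨(fun i => F (Sum.inl i), fun i => F (Sum.inr i)), ?_, ?_⟩⟩
    · have : Sum.elim (fun i => F (Sum.inl i)) (fun i => F (Sum.inr i)) = F := by
        funext a; cases a <;> rfl
      rw [this]; exact hFinj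
    · have : Sum.elim (fun i => F (Sum.inl i)) (fun i => F (Sum.inr i)) = F := by
        funext a; cases a <;> rfl
      rw [this]; exact himg
  obtain ⟨pm, hpm⟩ := Finite.exists_max (fun p : P => ∑ j, dist (p.1.1 j) (p.1.2 j))
  obtain ⟨⟨x, y⟩, hinj, himg⟩ := pm
  dsimp only at hinj himg hpm
  refine ⟨x, y, hinj, himg, ?_⟩
  -- swap inequalities
  have swap1 : ∀ i j : Fin k, i ≠ j →
      dist (x i) (x j) + dist (y i) (y j)
        ≤ dist (x i) (y i) + dist (x j) (y j) := by
    intro i j hij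
    set x' := Function.update x j (y i) with hx'
    set y' := Function.update y i (x j) with hy'
    have hcomp : Sum.elim x' y'
        = Sum.elim x y ∘ (Equiv.swap (Sum.inl j) (Sum.inr i) : Fin k ⊕ Fin k ≃ _) := by
      funext a
      cases a with
      | inl i' =>
        by_cases h : i' = j
        · subst h
          simp [hx', Equiv.swap_apply_left]
        · have hs : (Equiv.swap (Sum.inl j) (Sum.inr i)) (Sum.inl i') = Sum.inl i' :=
            Equiv.swap_apply_of_ne_of_ne (fun hh => h (Sum.inl.inj hh)) (by simp)
          simp [hx', Function.update_of_ne h, hs]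
      | inr j' =>
        by_cases h : j' = i
        · subst h
          simp [hy', Equiv.swap_apply_right]
        · have hs : (Equiv.swap (Sum.inl j) (Sum.inr i)) (Sum.inr j') = Sum.inr j' :=
            Equiv.swap_apply_of_ne_of_ne (by simp) (fun hh => h (Sum.inr.inj hh))
          simp [hy', Function.update_of_ne h, hs]
    have hinj' : Function.Injective (Sum.elim x' y') := by
      rw [hcomp]; exact hinj.comp (Equiv.injective _)
    have himg' : Finset.image (Sum.elim x' y') Finset.univ = O := by
      rw [hcomp, ← Finset.image_image, Finset.image_univ_equiv, himg]
    have hle : ∑ a, dist (x' a) (y' a) ≤ ∑ a, dist (x a) (y a) :=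
      hpm ⟨⟨x', y'⟩, hinj', himg'⟩
    rw [sum_split hij (fun a => dist (x' a) (y' a)),
      sum_split hij (fun a => dist (x a) (y a))] at hle
    have e1 : x' i = x i := Function.update_of_ne hij _ _
    have e2 : y' i = x j := Function.update_self _ _ _
    have e3 : x' j = y i := Function.update_self _ _ _
    have e4 : y' j = y j := Function.update_of_ne (Ne.symm hij) _ _
    have etail : ∑ a ∈ (Finset.univ.erase i).erase j, dist (x' a) (y' a)
        = ∑ a ∈ (Finset.univ.erase i).erase j, dist (x a) (y a) := by
      apply Finset.sum_congr rfl
      intro a ha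
      simp only [Finset.mem_erase] at ha
      rw [hx', hy', Function.update_of_ne ha.1, Function.update_of_ne ha.2.1]
    rw [e1, e2, e3, e4, etail] at hle
    have c1 : dist (x i) (x j) = dist (x i) (x j) := rfl
    have c2 : dist (y i) (y j) = dist (y i) (y j) := rfl
    linarith [dist_comm (y i) (y j)]
  have swap2 : ∀ i j : Fin k, i ≠ j →
      dist (x i) (y j) + dist (x j) (y i)
        ≤ dist (x i) (y i) + dist (x j) (y j) := by
    intro i j hij
    set y' := y ∘ (Equiv.swap i j) with hy'
    have hcomp : Sum.elim x y'
        = Sum.elim x y ∘ (Equiv.sumCongr (Equiv.refl (Fin k)) (Equiv.swap i j)) := by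
      funext a
      cases a with
      | inl i' => rfl
      | inr j' => rfl
    have hinj' : Function.Injective (Sum.elim x y') := by
      rw [hcomp]; exact hinj.comp (Equiv.injective _)
    have himg' : Finset.image (Sum.elim x y') Finset.univ = O := by
      rw [hcomp, ← Finset.image_image, Finset.image_univ_equiv, himg]
    have hle : ∑ a, dist (x a) (y' a) ≤ ∑ a, dist (x a) (y a) :=
      hpm ⟨⟨x, y'⟩, hinj', himg'⟩
    rw [sum_split hij (fun a => dist (x a) (y' a)),
      sum_split hij (fun a => dist (x a) (y a))] at hle
    have e2 : y' i = y j := by simp [hy', Equiv.swap_apply_left]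
    have e4 : y' j = y i := by simp [hy', Equiv.swap_apply_right]
    have etail : ∑ a ∈ (Finset.univ.erase i).erase j, dist (x a) (y' a)
        = ∑ a ∈ (Finset.univ.erase i).erase j, dist (x a) (y a) := by
      apply Finset.sum_congr rfl
      intro a ha
      simp only [Finset.mem_erase] at ha
      rw [hy']
      simp [Equiv.swap_apply_of_ne_of_ne ha.2.1 ha.1]
    rw [e2, e4, etail] at hle
    linarith
  -- now the bound
  rw [← himg, sum_dist_image k x y hinj]
  set W := ∑ j, dist (x j) (y j) with hW
  set Br : Fin k → Fin k → ℝ := fun i j =>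
    dist (x i) (x j) + dist (x i) (y j) + dist (y i) (x j) + dist (y i) (y j) with hBr
  have hbr : ∀ i : Fin k,
      ∑ j, Br i j ≤ 2 * ((k:ℝ) - 1) * dist (x i) (y i) + 2 * W := by
    intro i
    have hsum : ∑ j, Br i j = Br i i + ∑ j ∈ Finset.univ.erase i, Br i j :=
      (Finset.add_sum_erase _ _ (Finset.mem_univ i)).symm
    have hdiag : Br i i = 2 * dist (x i) (y i) := by
      simp [hBr, dist_comm (y i) (x i)]
      ring
    have hterm : ∀ j ∈ Finset.univ.erase i, Br i j
        ≤ 2 * (dist (x i) (y i) + dist (x j) (y j)) := by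
      intro j hj
      have hij : i ≠ j := by
        simp only [Finset.mem_erase] at hj
        exact (hj.1).symm
      have h1 := swap1 i j hij
      have h2 := swap2 i j hij
      have : dist (y i) (x j) = dist (x j) (y i) := dist_comm _ _
      simp only [hBr]
      linarith
    have htail : ∑ j ∈ Finset.univ.erase i, dist (x j) (y j) = W - dist (x i) (y i) := by
      have := Finset.add_sum_erase Finset.univ (fun j => dist (x j) (y j))
        (Finset.mem_univ i)
      rw [hW]
      linarith
    have hcard : ((Finset.univ.erase i).card : ℝ) = (k:ℝ) - 1 := by
      rw [Finset.card_erase_of_mem (Finset.mem_univ i), Finset.card_univ,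
        Fintype.card_fin, Nat.cast_sub hk]
      simp
    calc ∑ j, Br i j = Br i i + ∑ j ∈ Finset.univ.erase i, Br i j := hsum
      _ ≤ 2 * dist (x i) (y i)
          + ∑ j ∈ Finset.univ.erase i, 2 * (dist (x i) (y i) + dist (x j) (y j)) := by
          rw [hdiag]
          exact add_le_add le_rfl (Finset.sum_le_sum hterm)
      _ = 2 * ((k:ℝ) - 1) * dist (x i) (y i) + 2 * W := by
          rw [← Finset.mul_sum, Finset.sum_add_distrib, Finset.sum_const,
            nsmul_eq_mul, htail, hcard]
          ring
  calc ∑ i, ∑ j, Br i j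
      ≤ ∑ i, (2 * ((k:ℝ) - 1) * dist (x i) (y i) + 2 * W) :=
        Finset.sum_le_sum (fun i _ => hbr i)
    _ = 2 * ((k:ℝ) - 1) * W + (k:ℝ) * (2 * W) := by
        rw [Finset.sum_add_distrib, ← Finset.mul_sum, Finset.sum_const,
          Finset.card_univ, Fintype.card_fin, nsmul_eq_mul]
    _ = (4 * (k:ℝ) - 2) * W := by ring

end Aux3

set_option maxHeartbeats 2000000 in
/-- GreedyPairs is a 4-approximation for single-cluster diversification with a monotone
submodular quality function and even budget `b = 2k`: if at each step `i` the pair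
`{u i, v i}` maximizes `φ_e(S^{i−1}) = f(S^{i−1} ∪ e) − f(S^{i−1}) + 2λ(b−1)d(e)` over
pairs disjoint from `S^{i−1}`, then the output `S = S^{k}` satisfies `4·G(S) ≥ G(O)`
for every `O` of size `b`, where `G(T) = f(T) + λ·Σ_{{p,q}⊆T} 2 d(p,q)`. -/
theorem stmt_15 {α : Type*} [MetricSpace α] [Fintype α] [DecidableEq α]
    (f : Finset α → ℝ) (hf0 : f ∅ = 0)
    (hmono : ∀ A B : Finset α, A ⊆ B → f A ≤ f B)
    (hsub : ∀ A B : Finset α, A ⊆ B → ∀ x ∉ B,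
      f (insert x B) - f B ≤ f (insert x A) - f A)
    (lam : ℝ) (hlam : 0 ≤ lam)
    (b k : ℕ) (hb : b = 2 * k) (hk : 1 ≤ k)
    (u v : Fin k → α)
    (hinj : Function.Injective (Sum.elim u v : Fin k ⊕ Fin k → α))
    (Sset : ℕ → Finset α)
    (hSset : ∀ i : ℕ, Sset i =
      (Finset.univ.filter fun j : Fin k => (j : ℕ) < i).biUnion fun j => {u j, v j})
    (phi : α → α → Finset α → ℝ)
    (hphi : ∀ p q (A : Finset α), phi p q A =
      f (insert p (insert q A)) - f A + 2 * lam * ((b : ℝ) - 1) * dist p q)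
    (hgreedy : ∀ i : Fin k, ∀ p q : α, p ≠ q → p ∉ Sset (i : ℕ) → q ∉ Sset (i : ℕ) →
      phi p q (Sset (i : ℕ)) ≤ phi (u i) (v i) (Sset (i : ℕ)))
    (G : Finset α → ℝ)
    (hG : ∀ T : Finset α, G T = f T + lam * ∑ p ∈ T, ∑ q ∈ T, dist p q) :
    ∀ O : Finset α, O.card = b → G O ≤ 4 * G (Sset k) := by
  classical
  intro O hO
  -- basic facts about Sset
  have hmem : ∀ (z : α) (i : ℕ),
      z ∈ Sset i ↔ ∃ j : Fin k, (j:ℕ) < i ∧ (z = u j ∨ z = v j) := by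
    intro z i
    rw [hSset]
    simp [Finset.mem_biUnion, Finset.mem_filter, Finset.mem_insert, Finset.mem_singleton]
  have hmono_S : ∀ {i i' : ℕ}, i ≤ i' → Sset i ⊆ Sset i' := by
    intro i i' h z hz
    rw [hmem] at hz ⊢
    obtain ⟨j, hj, hz⟩ := hz
    exact ⟨j, lt_of_lt_of_le hj h, hz⟩
  have hS0 : Sset 0 = ∅ := by
    rw [hSset]
    simp
  have hfilter_ins : ∀ (i : Fin k),
      (Finset.univ.filter fun j : Fin k => (j:ℕ) < (i:ℕ)+1)
        = insert i (Finset.univ.filter fun j : Fin k => (j:ℕ) < (i:ℕ)) := by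
    intro i
    ext j
    simp [Nat.lt_succ_iff_lt_or_eq, Fin.ext_iff]
    omega
  have hstep : ∀ i : Fin k,
      Sset ((i:ℕ)+1) = insert (u i) (insert (v i) (Sset (i:ℕ))) := by
    intro i
    rw [hSset, hSset, hfilter_ins i, Finset.biUnion_insert]
    ext z
    simp only [Finset.mem_union, Finset.mem_insert, Finset.mem_singleton]
    tauto
  have huS : ∀ i : Fin k, u i ∉ Sset (i:ℕ) ∧ v i ∉ Sset (i:ℕ) := by
    intro i
    constructor
    · intro h
      rw [hmem] at h
      obtain ⟨j, hj, h⟩ := h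
      rcases h with h | h
      · have : (Sum.inl i : Fin k ⊕ Fin k) = Sum.inl j := hinj h
        simp only [Sum.inl.injEq] at this
        subst this
        omega
      · exact absurd (hinj (show (Sum.elim u v) (Sum.inl i) = (Sum.elim u v) (Sum.inr j) from h)) (by simp)
    · intro h
      rw [hmem] at h
      obtain ⟨j, hj, h⟩ := h
      rcases h with h | h
      · exact absurd (hinj (show (Sum.elim u v) (Sum.inr i) = (Sum.elim u v) (Sum.inl j) from h)) (by simp)
      · have : (Sum.inr i : Fin k ⊕ Fin k) = Sum.inr j := hinj h
        simp only [Sum.inr.injEq] at this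
        subst this
        omega
  have huv : ∀ i : Fin k, u i ≠ v i := by
    intro i h
    exact absurd (hinj (show (Sum.elim u v) (Sum.inl i) = (Sum.elim u v) (Sum.inr i) from h)) (by simp)
  set S := Sset k with hSdef
  have hf_nonneg : ∀ T, 0 ≤ f T := by
    intro T
    have := hmono ∅ T (Finset.empty_subset T)
    linarith
  have hbcast : (b:ℝ) = 2 * (k:ℝ) := by rw [hb]; push_cast; ring
  have hb1 : (1:ℝ) ≤ (b:ℝ) - 1 := by
    rw [hbcast]
    have : (1:ℝ) ≤ (k:ℝ) := by exact_mod_cast hk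
    linarith
  have hlb : 0 ≤ 2 * lam * ((b:ℝ) - 1) := by
    apply mul_nonneg (by linarith)
    linarith
  set Phi : Fin k → ℝ := fun i => phi (u i) (v i) (Sset (i:ℕ)) with hPhidef
  have hPhi_nonneg : ∀ i, 0 ≤ Phi i := by
    intro i
    rw [hPhidef]
    simp only
    rw [hphi]
    have h1 : f (Sset (i:ℕ)) ≤ f (insert (u i) (insert (v i) (Sset (i:ℕ)))) :=
      hmono _ _ ((Finset.subset_insert _ _).trans (Finset.subset_insert _ _))
    have h2 : 0 ≤ 2 * lam * ((b:ℝ)-1) * dist (u i) (v i) :=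
      mul_nonneg hlb dist_nonneg
    linarith
  have htel : ∑ i, Phi i
      = f S - f (Sset 0) + 2*lam*((b:ℝ)-1) * ∑ i, dist (u i) (v i) := by
    have heach : ∀ i : Fin k, Phi i
        = (f (Sset ((i:ℕ)+1)) - f (Sset (i:ℕ))) + 2*lam*((b:ℝ)-1)*dist (u i) (v i) := by
      intro i
      rw [hPhidef]
      simp only
      rw [hphi, hstep i]
    rw [Finset.sum_congr rfl (fun i _ => heach i), Finset.sum_add_distrib,
      ← Finset.mul_sum]
    congr 1
    rw [Fin.sum_univ_eq_sum_range (fun i => f (Sset (i+1)) - f (Sset i)) k,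
      Finset.sum_range_sub (fun i => f (Sset i)) k]
  have hSimg : S = Finset.image (Sum.elim u v) Finset.univ := by
    ext z
    rw [hSdef, hmem z k]
    simp only [Finset.mem_image, Finset.mem_univ, true_and]
    constructor
    · rintro ⟨j, -, h | h⟩
      · exact ⟨Sum.inl j, h.symm⟩
      · exact ⟨Sum.inr j, h.symm⟩
    · rintro ⟨a, ha⟩
      cases a with
      | inl j => exact ⟨j, j.isLt, Or.inl ha.symm⟩
      | inr j => exact ⟨j, j.isLt, Or.inr ha.symm⟩
  have hDS : 2*(k:ℝ) * ∑ i, dist (u i) (v i) ≤ ∑ p ∈ S, ∑ q ∈ S, dist p q := by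
    rw [hSimg]
    exact sum_dist_lower k u v hinj
  -- the matching of O
  obtain ⟨x, y, hMinj, hMimg, hDO⟩ := exists_matching k hk O (by rw [hO, hb])
  set dstar := ∑ j, dist (x j) (y j) with hdstar
  have hdstar_nonneg : 0 ≤ dstar :=
    Finset.sum_nonneg (fun j _ => dist_nonneg)
  have hxyne : ∀ j : Fin k, x j ≠ y j := by
    intro j h
    exact absurd (hMinj (show (Sum.elim x y) (Sum.inl j) = (Sum.elim x y) (Sum.inr j) from h)) (by simp)
  -- the B sets
  set B : ℕ → Finset α := fun n =>
    S ∪ (Finset.univ.filter fun j : Fin k => (j:ℕ) < n).biUnion (fun j => {x j, y j}) with hBdef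
  have hB0 : B 0 = S := by
    rw [hBdef]
    simp
  have hBk : O ⊆ B k := by
    intro z hz
    rw [← hMimg] at hz
    simp only [Finset.mem_image, Finset.mem_univ, true_and] at hz
    obtain ⟨a, ha⟩ := hz
    rw [hBdef]
    simp only [Finset.mem_union, Finset.mem_biUnion, Finset.mem_filter, Finset.mem_univ,
      true_and, Finset.mem_insert, Finset.mem_singleton]
    cases a with
    | inl j => exact Or.inr ⟨j, j.isLt, Or.inl ha.symm⟩
    | inr j => exact Or.inr ⟨j, j.isLt, Or.inr ha.symm⟩
  have hBstep : ∀ j : Fin k, B ((j:ℕ)+1) = insert (x j) (insert (y j) (B (j:ℕ))) := by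
    intro j
    rw [hBdef]
    simp only
    rw [hfilter_ins j, Finset.biUnion_insert]
    ext z
    simp only [Finset.mem_union, Finset.mem_insert, Finset.mem_singleton]
    tauto
  have hSB : ∀ n, S ⊆ B n := by
    intro n
    rw [hBdef]
    exact Finset.subset_union_left
  set LB : Fin k → ℝ := fun j =>
    (f (B ((j:ℕ)+1)) - f (B (j:ℕ))) + 2*lam*((b:ℝ)-1) * dist (x j) (y j) with hLBdef
  -- key comparison
  have hkey : ∀ (j : Fin k) (i : Fin k),
      x j ∉ Sset (i:ℕ) → y j ∉ Sset (i:ℕ) → LB j ≤ Phi i := by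
    intro j i hx hy
    have hsubset : Sset (i:ℕ) ⊆ B (j:ℕ) :=
      (hmono_S (le_of_lt i.isLt)).trans (hSB _)
    have h1 := marg_pair f hmono hsub hsubset (x j) (y j)
    rw [← hBstep j] at h1
    have h2 : LB j ≤ phi (x j) (y j) (Sset (i:ℕ)) := by
      rw [hLBdef, hphi]
      simp only
      linarith
    exact h2.trans (hgreedy i (x j) (y j) (hxyne j) hx hy)
  -- hitting times
  have hex : ∀ j : Fin k, ∃ i : ℕ,
      (x j ∈ Sset (i+1) ∨ y j ∈ Sset (i+1)) ∨ k ≤ i + 1 :=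
    fun j => ⟨k, Or.inr (by omega)⟩
  set t : Fin k → ℕ := fun j => Nat.find (hex j) with htdef
  have ht_lt : ∀ j, t j < k := by
    intro j
    have h1 : t j ≤ k - 1 := Nat.find_le (Or.inr (by omega))
    have h2 : t j = Nat.find (hex j) := rfl
    omega
  have ht_not : ∀ (j : Fin k) (i : ℕ), i ≤ t j →
      x j ∉ Sset i ∧ y j ∉ Sset i := by
    intro j i hi
    match i, hi with
    | 0, _ => rw [hS0]; simp
    | (i'+1), hi =>
      have hmin := Nat.find_min (hex j) (show i' < t j by omega)
      push_neg at hmin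
      exact ⟨hmin.1.1, hmin.1.2⟩
  set tfin : Fin k → Fin k := fun j => ⟨t j, ht_lt j⟩ with htfin
  set H : Finset (Fin k) :=
    Finset.univ.filter (fun j : Fin k => x j ∈ S ∨ y j ∈ S) with hHdef
  have hmemt : ∀ j ∈ H, x j ∈ Sset (t j + 1) ∨ y j ∈ Sset (t j + 1) := by
    intro j hj
    have hR := Nat.find_spec (hex j)
    rcases hR with h | h
    · exact h
    · have h2 : t j = Nat.find (hex j) := rfl
      have : t j + 1 = k := by have := ht_lt j; omega
      rw [this]
      rw [hHdef] at hj
      simp only [Finset.mem_filter, Finset.mem_univ, true_and] at hj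
      exact hj
  set w : Fin k → α := fun j => if x j ∈ Sset (t j + 1) then x j else y j with hwdef
  have hw : ∀ j ∈ H, (w j = x j ∨ w j = y j)
      ∧ w j ∈ ({u (tfin j), v (tfin j)} : Finset α) := by
    intro j hj
    have hnot := ht_not j (t j) le_rfl
    have hSstep : Sset (t j + 1) = insert (u (tfin j)) (insert (v (tfin j)) (Sset (t j))) := by
      have := hstep (tfin j)
      simpa using this
    by_cases hc : x j ∈ Sset (t j + 1)
    · refine ⟨Or.inl (by rw [hwdef]; simp [hc]), ?_⟩
      rw [hwdef]
      simp only [hc, if_pos]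
      rw [hSstep] at hc
      simp only [Finset.mem_insert, Finset.mem_singleton] at hc ⊢
      rcases hc with h | h | h
      · exact Or.inl h
      · exact Or.inr h
      · exact absurd h hnot.1
    · have hy : y j ∈ Sset (t j + 1) := by
        rcases hmemt j hj with h | h
        · exact absurd h hc
        · exact h
      refine ⟨Or.inr (by rw [hwdef]; simp [hc]), ?_⟩
      rw [hwdef]
      simp only [hc, if_neg, if_false]
      rw [hSstep] at hy
      simp only [Finset.mem_insert, Finset.mem_singleton] at hy ⊢
      rcases hy with h | h | h
      · exact Or.inl h
      · exact Or.inr h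
      · exact absurd h hnot.2
  -- multiplicities
  set m : Fin k → ℕ := fun i => (H.filter (fun j => tfin j = i)).card with hmdef
  have hm2 : ∀ i, m i ≤ 2 := by
    intro i
    rw [hmdef]
    simp only
    have h2 : ({u i, v i} : Finset α).card ≤ 2 := by
      apply le_trans (Finset.card_insert_le _ _)
      simp
    refine le_trans (Finset.card_le_card_of_injOn w ?_ ?_) h2
    · intro j hj
      simp only [Finset.coe_filter, Set.mem_setOf_eq] at hj
      have := (hw j hj.1).2
      rw [hj.2] at this
      exact this
    · intro j hj j' hj' hww
      simp only [Finset.coe_filter, Set.mem_setOf_eq] at hj hj'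
      have h1 := (hw j hj.1).1
      have h2 := (hw j' hj'.1).1
      by_contra hne
      rcases h1 with h1 | h1 <;> rcases h2 with h2 | h2 <;>
        rw [h1, h2] at hww
      · exact hne (Sum.inl.inj (hMinj (show (Sum.elim x y) (Sum.inl j) = (Sum.elim x y) (Sum.inl j') from hww)))
      · exact absurd (hMinj (show (Sum.elim x y) (Sum.inl j) = (Sum.elim x y) (Sum.inr j') from hww)) (by simp)
      · exact absurd (hMinj (show (Sum.elim x y) (Sum.inr j) = (Sum.elim x y) (Sum.inl j') from hww)) (by simp)
      · exact hne (Sum.inr.inj (hMinj (show (Sum.elim x y) (Sum.inr j) = (Sum.elim x y) (Sum.inr j') from hww)))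
  have hmsum : ∑ i : Fin k, (m i : ℝ) = (H.card : ℝ) := by
    rw [← Nat.cast_sum]
    congr 1
    rw [Finset.card_eq_sum_card_fiberwise (f := tfin) (t := Finset.univ)
      (fun j _ => Finset.mem_univ _)]
  have htfin_coe : ∀ j, ((tfin j : ℕ)) = t j := fun j => rfl
  clear_value m w tfin t
  have hHk : H.card ≤ k := by
    simpa using Finset.card_le_univ H
  set hc : ℝ := (H.card : ℝ) with hhcdef
  have hhck : hc ≤ (k:ℝ) := by rw [hhcdef]; exact_mod_cast hHk
  have hhc0 : 0 ≤ hc := Nat.cast_nonneg _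
  set N : ℝ := 2*(k:ℝ) - hc with hNdef
  have hN0 : 0 < N := by
    have : (1:ℝ) ≤ (k:ℝ) := by exact_mod_cast hk
    rw [hNdef]; linarith
  set wf : Fin k → ℝ := fun i => (2 - (m i : ℝ)) / N with hwfdef
  have hwf_nonneg : ∀ i, 0 ≤ wf i := by
    intro i
    apply div_nonneg _ (le_of_lt hN0)
    have := hm2 i
    have : ((m i : ℝ)) ≤ 2 := by exact_mod_cast this
    linarith
  have hwf_sum : ∑ i, wf i = 1 := by
    rw [hwfdef]
    simp only
    rw [← Finset.sum_div]
    rw [Finset.sum_sub_distrib, hmsum, Finset.sum_const, Finset.card_univ,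
      Fintype.card_fin, nsmul_eq_mul]
    rw [hNdef]
    have hN' : (2*(k:ℝ) - hc) ≠ 0 := ne_of_gt (by linarith)
    rw [div_eq_one_iff_eq hN']
    ring
  -- per-pair bounds
  have hLB_H : ∀ j ∈ H, LB j ≤ Phi (tfin j) := by
    intro j hj
    have h := ht_not j (t j) le_rfl
    refine hkey j (tfin j) ?_ ?_
    · rw [htfin_coe]; exact h.1
    · rw [htfin_coe]; exact h.2
  have hLB_free : ∀ j ∈ Finset.univ \ H, LB j ≤ ∑ i, wf i * Phi i := by
    intro j hj
    simp only [Finset.mem_sdiff, Finset.mem_univ, true_and, hHdef,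
      Finset.mem_filter, not_or, not_and] at hj
    have hj' : x j ∉ S ∧ y j ∉ S := by tauto
    have hall : ∀ i : Fin k, LB j ≤ Phi i := by
      intro i
      apply hkey j i
      · exact fun h => hj'.1 (hmono_S (le_of_lt i.isLt) h)
      · exact fun h => hj'.2 (hmono_S (le_of_lt i.isLt) h)
    calc LB j = ∑ i, wf i * LB j := by
          rw [← Finset.sum_mul, hwf_sum, one_mul]
      _ ≤ ∑ i, wf i * Phi i :=
          Finset.sum_le_sum (fun i _ =>
            mul_le_mul_of_nonneg_left (hall i) (hwf_nonneg i))
  -- aggregate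
  have hfibsum : ∑ j ∈ H, Phi (tfin j) = ∑ i, (m i : ℝ) * Phi i := by
    rw [← Finset.sum_fiberwise_of_maps_to (g := tfin) (t := Finset.univ)
      (fun j _ => Finset.mem_univ _) (fun j => Phi (tfin j))]
    apply Finset.sum_congr rfl
    intro i _
    have : ∀ j ∈ H.filter (fun j => tfin j = i), Phi (tfin j) = Phi i := by
      intro j hj
      simp only [Finset.mem_filter] at hj
      rw [hj.2]
    rw [Finset.sum_congr rfl this, Finset.sum_const, nsmul_eq_mul, hmdef]
  have hcard_free : ((Finset.univ \ H).card : ℝ) = (k:ℝ) - hc := by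
    rw [Finset.card_sdiff_of_subset (Finset.subset_univ H), Finset.card_univ, Fintype.card_fin]
    rw [hhcdef, Nat.cast_sub hHk]
  have htotal : ∑ j, LB j ≤ ∑ i, 2 * Phi i := by
    have hsplit : ∑ j, LB j = ∑ j ∈ H, LB j + ∑ j ∈ Finset.univ \ H, LB j := by
      rw [← Finset.sum_union (Finset.disjoint_sdiff)]
      congr 1
      rw [Finset.union_sdiff_of_subset (Finset.subset_univ H)]
    rw [hsplit]
    have h1 : ∑ j ∈ H, LB j ≤ ∑ i, (m i : ℝ) * Phi i := by
      rw [← hfibsum]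
      exact Finset.sum_le_sum hLB_H
    have h2 : ∑ j ∈ Finset.univ \ H, LB j
        ≤ ((k:ℝ) - hc) * ∑ i, wf i * Phi i := by
      calc ∑ j ∈ Finset.univ \ H, LB j
          ≤ ∑ _j ∈ Finset.univ \ H, ∑ i, wf i * Phi i :=
            Finset.sum_le_sum hLB_free
        _ = ((k:ℝ) - hc) * ∑ i, wf i * Phi i := by
            rw [Finset.sum_const, nsmul_eq_mul, hcard_free]
    have h3 : ∑ i, (m i : ℝ) * Phi i + ((k:ℝ) - hc) * ∑ i, wf i * Phi i
        ≤ ∑ i, 2 * Phi i := by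
      rw [Finset.mul_sum, ← Finset.sum_add_distrib]
      apply Finset.sum_le_sum
      intro i _
      have hmi : ((m i : ℝ)) ≤ 2 := by exact_mod_cast hm2 i
      have hfrac : ((k:ℝ) - hc) * ((2 - (m i : ℝ)) / N) ≤ 2 - (m i : ℝ) := by
        rw [div_eq_mul_inv, ← mul_assoc, ← div_eq_mul_inv, div_le_iff₀ hN0]
        have hkhcN : (k:ℝ) - hc ≤ N := by rw [hNdef]; linarith
        have h2mi : (0:ℝ) ≤ 2 - (m i : ℝ) := by linarith
        nlinarith [mul_le_mul_of_nonneg_left hkhcN h2mi]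
      have hcoeff : (m i : ℝ) + ((k:ℝ) - hc) * ((2 - (m i : ℝ)) / N) ≤ 2 := by
        linarith
      have hmul := mul_le_mul_of_nonneg_right hcoeff (hPhi_nonneg i)
      have hEq : (m i : ℝ) * Phi i + ((k:ℝ) - hc) * (wf i * Phi i)
          = ((m i : ℝ) + ((k:ℝ) - hc) * ((2 - (m i : ℝ)) / N)) * Phi i := by
        simp only [hwfdef]
        ring
      rw [hEq]
      exact hmul
    linarith
  -- lower bound on sum of LB
  have hLBsum : ∑ j, LB j
      = (f (B k) - f (B 0)) + 2*lam*((b:ℝ)-1) * dstar := by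
    rw [hLBdef]
    simp only
    rw [Finset.sum_add_distrib, ← Finset.mul_sum, ← hdstar]
    congr 1
    rw [Fin.sum_univ_eq_sum_range (fun i => f (B (i+1)) - f (B i)) k,
      Finset.sum_range_sub (fun i => f (B i)) k]
  -- final assembly
  have hfO : f O ≤ f (B k) := hmono _ _ hBk
  have hGO : G O = f O + lam * ∑ p ∈ O, ∑ q ∈ O, dist p q := hG O
  have hGS : G S = f S + lam * ∑ p ∈ S, ∑ q ∈ S, dist p q := hG S
  have hDOlam : lam * ∑ p ∈ O, ∑ q ∈ O, dist p q ≤ 2*lam*((b:ℝ)-1) * dstar := by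
    have h1 : lam * ∑ p ∈ O, ∑ q ∈ O, dist p q ≤ lam * ((4*(k:ℝ)-2) * dstar) :=
      mul_le_mul_of_nonneg_left hDO hlam
    have h2 : lam * ((4*(k:ℝ)-2) * dstar) = 2*lam*((b:ℝ)-1) * dstar := by
      rw [hbcast]; ring
    linarith
  have hsum2Phi : ∑ i, 2*Phi i
      = 2 * (f S - f (Sset 0)) + 4*lam*((b:ℝ)-1) * ∑ i, dist (u i) (v i) := by
    rw [← Finset.mul_sum, htel]
    ring
  have hdistS : 4*lam*((b:ℝ)-1) * ∑ i, dist (u i) (v i)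
      ≤ 4*lam* ∑ p ∈ S, ∑ q ∈ S, dist p q := by
    have hd_nonneg : 0 ≤ ∑ i, dist (u i) (v i) :=
      Finset.sum_nonneg (fun i _ => dist_nonneg)
    have h1 : ((b:ℝ)-1) * ∑ i, dist (u i) (v i)
        ≤ 2*(k:ℝ) * ∑ i, dist (u i) (v i) := by
      apply mul_le_mul_of_nonneg_right _ hd_nonneg
      rw [hbcast]; linarith
    have h2 := hDS
    nlinarith [mul_le_mul_of_nonneg_left (h1.trans h2) (show (0:ℝ) ≤ 4*lam by linarith)]
  have hfS0 : f (Sset 0) = 0 := by rw [hS0, hf0]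
  have hB0' : f (B 0) = f S := by rw [hB0]
  have hlamDS : 0 ≤ lam * ∑ p ∈ S, ∑ q ∈ S, dist p q := by
    apply mul_nonneg hlam
    exact Finset.sum_nonneg (fun p _ => Finset.sum_nonneg (fun q _ => dist_nonneg))
  -- chain: G O ≤ f S + ∑ LB ≤ f S + ∑ 2Phi ≤ 3 f S + 4 lam D_S ≤ 4 G S
  have key1 : G O ≤ f S + ∑ j, LB j := by
    rw [hGO, hLBsum, hB0']
    linarith
  have key2 : f S + ∑ j, LB j ≤ f S + ∑ i, 2*Phi i := by linarith
  have key3 : f S + ∑ i, 2*Phi i ≤ 3 * f S + 4*lam* ∑ p ∈ S, ∑ q ∈ S, dist p q := by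
    rw [hsum2Phi, hfS0]
    linarith
  rw [hGS]
  have := hf_nonneg S
  linarith
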